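/- arXiv:1909.04875 — 7 statements merged into one kernel-verified Lean document; each statement's English description precedes it below -/
import Mathlib

section
/- Faithfulness of Φ: if f₁, f₂ : A → B are distinct maps each with image of cardinality greater than 2, then f₁ and f₂ are not ≈_A-equivalent, and hence the induced natural transformations Φf₁, Φf₂ : ΦB → ΦA differ (they differ at the component at B evaluated on the class of id_B). -/
def IsK1 {A : Type} (R : Set (Set A)) : Prop :=
  ∀ r ∈ R, r.Nonempty ∧ rᶜ ∈ R

def Approx {A X : Type} (R : Set (Set A)) (g₁ g₂ : A → X) : Prop :=
  g₁ = g₂ ∨ ∃ x x' : X, x ≠ x' ∧ Set.range g₁ = {x, x'} ∧ Set.range g₂ = {x, x'} ∧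
    g₁ ⁻¹' {x} = g₂ ⁻¹' {x'} ∧ g₁ ⁻¹' {x} ∈ R

lemma pair_card_le {B : Type} (x x' : B) : Cardinal.mk ({x, x'} : Set B) ≤ 2 := by
  calc Cardinal.mk ({x, x'} : Set B) ≤ Cardinal.mk ({x'} : Set B) + 1 :=
        Cardinal.mk_insert_le
    _ = 2 := by rw [Cardinal.mk_singleton]; norm_num

lemma approx_sub {A B : Type} (R : Set (Set A)) (g h : A → B) (hgh : Approx R g h) :
    g = h ∨ (Cardinal.mk (Set.range g) ≤ 2 ∧ Cardinal.mk (Set.range h) ≤ 2) := by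
  rcases hgh with rfl | ⟨x, x', _, hg, hh, _, _⟩
  · exact Or.inl rfl
  · right
    rw [hg, hh]
    exact ⟨pair_card_le x x', pair_card_le x x'⟩

lemma eqvgen_sub {A B : Type} (R : Set (Set A)) (g h : A → B)
    (hgh : Relation.EqvGen (fun g₁ g₂ : A → B => Approx R g₁ g₂) g h) :
    g = h ∨ (Cardinal.mk (Set.range g) ≤ 2 ∧ Cardinal.mk (Set.range h) ≤ 2) := by
  induction hgh with
  | rel a b hab => exact approx_sub R a b hab
  | refl a => exact Or.inl rfl
  | symm a b _ ih =>
    rcases ih with rfl | ⟨h1, h2⟩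
    · exact Or.inl rfl
    · exact Or.inr ⟨h2, h1⟩
  | trans a b c _ _ ih1 ih2 =>
    rcases ih1 with rfl | ⟨h1, h2⟩
    · exact ih2
    · rcases ih2 with rfl | ⟨h3, h4⟩
      · exact Or.inr ⟨h1, h2⟩
      · exact Or.inr ⟨h1, h4⟩

/-- Faithfulness of Φ: distinct maps `f₁ f₂ : A → B` whose images have more than
two elements are not ≈_A-equivalent, hence their classes, the values of the
components `(Φf₁)_B` and `(Φf₂)_B` at the class of `id_B`, differ. -/
theorem stmt4 {A B : Type} (R : Set (Set A)) (hK1 : IsK1 R)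
    (f₁ f₂ : A → B) (hne : f₁ ≠ f₂)
    (h₁ : 2 < Cardinal.mk (Set.range f₁)) (h₂ : 2 < Cardinal.mk (Set.range f₂)) :
    ¬ Approx R f₁ f₂ ∧
      Quot.mk (fun g₁ g₂ : A → B => Approx R g₁ g₂) f₁ ≠
        Quot.mk (fun g₁ g₂ : A → B => Approx R g₁ g₂) f₂ := by
  constructor
  · intro hap
    rcases approx_sub R f₁ f₂ hap with rfl | ⟨hc, _⟩
    · exact hne rfl
    · exact absurd hc (not_le.mpr h₁)
  · intro hq
    have := Quot.eq.mp hq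
    rcases eqvgen_sub R f₁ f₂ this with rfl | ⟨hc, _⟩
    · exact hne rfl
    · exact absurd hc (not_le.mpr h₁)
end

section
/- Fullness of Φ (morphism recovery): let (A, R) and (B, S) satisfy (K1), and let μ : ΦB → ΦA be a natural transformation between the quotient functors. Choose f : A → B with [f] = μ_B([id_B]). Then for every set X and g : B → X, μ_X([g]) = [g ∘ f]; moreover f⁻¹[S] ∈ R for every S ∈ S, i.e., f is a morphism (A, R) → (B, S). -/
def PhiObj {A : Type} (R : Set (Set A)) (X : Type) : Type :=
  Quot (fun g₁ g₂ : A → X => Approx R g₁ g₂)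

lemma range_pair_cases {A X : Type} {g : A → X} {x x' : X}
    (h : Set.range g = {x, x'}) (a : A) : g a = x ∨ g a = x' := by
  have hm : g a ∈ Set.range g := Set.mem_range_self a
  rw [h] at hm
  simpa using hm

lemma approx_equiv {A X : Type} (R : Set (Set A)) :
    Equivalence (fun g₁ g₂ : A → X => Approx R g₁ g₂) := by
  constructor
  · intro g; exact Or.inl rfl
  · intro g₁ g₂ h
    rcases h with h | ⟨x, x', hne, hr1, hr2, hpre, hmem⟩
    · exact Or.inl h.symm
    · exact Or.inr ⟨x', x, hne.symm, by rwa [Set.pair_comm], by rwa [Set.pair_comm],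
        hpre.symm, hpre ▸ hmem⟩
  · intro g₁ g₂ g₃ h12 h23
    rcases h12 with rfl | ⟨x, x', hne, hr1, hr2, hpre12, hmem12⟩
    · exact h23
    rcases h23 with rfl | ⟨y, y', hne', hr2', hr3, hpre23, hmem23⟩
    · exact Or.inr ⟨x, x', hne, hr1, hr2, hpre12, hmem12⟩
    have e12 : ∀ a, g₁ a = x ↔ g₂ a = x' := fun a => by
      simpa using Set.ext_iff.mp hpre12 a
    have e23 : ∀ a, g₂ a = y ↔ g₃ a = y' := fun a => by
      simpa using Set.ext_iff.mp hpre23 a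
    have hyy : (y = x ∧ y' = x') ∨ (y = x' ∧ y' = x) := by
      have h1 : y ∈ ({x, x'} : Set X) := by
        rw [← hr2, hr2']; exact Set.mem_insert _ _
      have h2 : y' ∈ ({x, x'} : Set X) := by
        rw [← hr2, hr2']; exact Set.mem_insert_of_mem _ rfl
      simp only [Set.mem_insert_iff, Set.mem_singleton_iff] at h1 h2
      rcases h1 with rfl | rfl
      · rcases h2 with rfl | rfl
        · exact absurd rfl hne'
        · exact Or.inl ⟨rfl, rfl⟩
      · rcases h2 with rfl | rfl
        · exact Or.inr ⟨rfl, rfl⟩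
        · exact absurd rfl hne'
    have hr3' : Set.range g₃ = {x, x'} := by
      rcases hyy with ⟨rfl, rfl⟩ | ⟨rfl, rfl⟩
      · exact hr3
      · rw [hr3, Set.pair_comm]
    left
    funext a
    rcases hyy with ⟨hy, hy'⟩ | ⟨hy, hy'⟩
    all_goals rw [hy, hy'] at e23
    · -- e23 : g₂ a = x ↔ g₃ a = x'
      rcases range_pair_cases hr1 a with h1 | h1
      · have h2 : g₂ a = x' := (e12 a).mp h1
        have h3 : g₃ a ≠ x' := fun hc => hne (((e23 a).mpr hc).symm.trans h2)
        rw [h1, (range_pair_cases hr3' a).resolve_right h3]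
      · have h2 : g₂ a ≠ x' := fun hc => hne (((e12 a).mpr hc).symm.trans h1)
        have h2' : g₂ a = x := (range_pair_cases hr2 a).resolve_right h2
        rw [h1, ((e23 a).mp h2')]
    · -- e23 : g₂ a = x' ↔ g₃ a = x
      rcases range_pair_cases hr1 a with h1 | h1
      · have h2 : g₂ a = x' := (e12 a).mp h1
        rw [h1, (e23 a).mp h2]
      · have h2 : g₂ a ≠ x' := fun hc => hne (((e12 a).mpr hc).symm.trans h1)
        have h3 : g₃ a ≠ x := fun hc => h2 ((e23 a).mpr hc)
        rw [h1, ((range_pair_cases hr3' a).resolve_left h3)]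

/-- Fullness of Φ: given a natural transformation μ : ΦB → ΦA (components on the
quotients, natural with respect to the actions [g] ↦ [h ∘ g]) and `f : A → B`
with `[f] = μ_B([id_B])`, then `μ_X([g]) = [g ∘ f]` for all `g : B → X`, and `f`
is a morphism `(A, R) → (B, S)`, i.e. `f⁻¹[S] ∈ R` for every `S ∈ 𝒮`. -/
theorem stmt5 {A B : Type} [Nonempty A] (R : Set (Set A)) (S : Set (Set B))
    (hK1A : IsK1 R) (hK1B : IsK1 S)
    (μ : ∀ X : Type, PhiObj S X → PhiObj R X)
    (hnat : ∀ (X Y : Type) (h : X → Y) (g : B → X) (g' : A → X),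
      μ X (Quot.mk _ g) = Quot.mk _ g' →
        μ Y (Quot.mk _ (h ∘ g)) = Quot.mk _ (h ∘ g'))
    (f : A → B)
    (hf : μ B (Quot.mk _ (id : B → B)) = Quot.mk _ f) :
    (∀ (X : Type) (g : B → X),
      μ X (Quot.mk _ g) = Quot.mk (fun g₁ g₂ : A → X => Approx R g₁ g₂) (g ∘ f)) ∧
    (∀ s ∈ S, f ⁻¹' s ∈ R) := by
  classical
  have part1 : ∀ (X : Type) (g : B → X),
      μ X (Quot.mk _ g) = Quot.mk (fun g₁ g₂ : A → X => Approx R g₁ g₂) (g ∘ f) := by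
    intro X g
    have h := hnat B X g id f hf
    simpa using h
  refine ⟨part1, ?_⟩
  intro s hs
  obtain ⟨hs_ne, hsc_mem⟩ := hK1B s hs
  obtain ⟨hsc_ne, -⟩ := hK1B sᶜ hsc_mem
  set χ₁ : B → Bool := fun b => decide (b ∈ s) with hχ₁
  set χ₂ : B → Bool := fun b => decide (b ∈ sᶜ) with hχ₂
  have hrange : ∀ (t : Set B) (inst : DecidablePred (· ∈ t)), t.Nonempty → tᶜ.Nonempty →
      Set.range (fun b => @decide (b ∈ t) (inst b)) = ({true, false} : Set Bool) := by
    rintro t inst ⟨b1, hb1⟩ ⟨b2, hb2⟩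
    ext v
    simp only [Set.mem_range, Set.mem_insert_iff, Set.mem_singleton_iff]
    constructor
    · intro _; cases v <;> simp
    · intro _
      cases v
      · exact ⟨b2, by simpa using hb2⟩
      · exact ⟨b1, by simp [hb1]⟩
  have hr1 : Set.range χ₁ = ({true, false} : Set Bool) := by rw [hχ₁]; exact hrange s _ hs_ne hsc_ne
  have hr2 : Set.range χ₂ = ({true, false} : Set Bool) := by
    rw [hχ₂]; exact hrange sᶜ _ hsc_ne (by rwa [compl_compl])
  have hpre : χ₁ ⁻¹' {true} = χ₂ ⁻¹' {false} := by
    ext b; simp [hχ₁, hχ₂]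
  have hmem : χ₁ ⁻¹' {true} ∈ S := by
    have : χ₁ ⁻¹' {true} = s := by ext b; simp [hχ₁]
    rwa [this]
  have hap : Approx S χ₁ χ₂ :=
    Or.inr ⟨true, false, by simp, hr1, hr2, hpre, hmem⟩
  have heq : Quot.mk (fun g₁ g₂ : A → Bool => Approx R g₁ g₂) (χ₁ ∘ f)
      = Quot.mk _ (χ₂ ∘ f) := by
    rw [← part1 Bool χ₁, ← part1 Bool χ₂, Quot.sound hap]
  have hx : Approx R (χ₁ ∘ f) (χ₂ ∘ f) :=
    (approx_equiv R).eqvGen_iff.mp (Quot.eqvGen_exact heq)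
  rcases hx with h | ⟨x, x', hne, -, -, hpre', hmem'⟩
  · obtain ⟨a⟩ := ‹Nonempty A›
    have := congrFun h a
    simp [hχ₁, hχ₂] at this
  · have hT : (χ₁ ∘ f) ⁻¹' {true} = f ⁻¹' s := by
      ext a; simp [hχ₁]
    have hF : (χ₁ ∘ f) ⁻¹' {false} = (f ⁻¹' s)ᶜ := by
      ext a; simp [hχ₁]
    cases x
    · -- x = false
      rw [hF] at hmem'
      have := (hK1A _ hmem').2
      rwa [compl_compl] at this
    · -- x = true
      rwa [hT] at hmem'
end

section
/- The two-point separation argument: given S ⊆ B, define g₁, g₂ : B → {1, 2} with g₁[S] = {1} = g₂[B \ S] and g₁[B \ S] = {2} = g₂[S] (assuming S and B \ S nonempty). Then g₁ ≈_B g₂ (with respect to any family S containing S and satisfying (K1)), g₁ ≠ g₂, and for any f : A → B, if g₁ ∘ f ≈_A g₂ ∘ f then f⁻¹[S] ∈ R. -/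
/-- The two-point separation argument: for `S ⊆ B` with `S` and `B \ S` nonempty,
the maps `g₁, g₂ : B → Fin 2` with `g₁[S] = {0} = g₂[B \ S]` and
`g₁[B \ S] = {1} = g₂[S]` satisfy `g₁ ≈_B g₂` (for any (K1) family `𝒮` containing
`S`), `g₁ ≠ g₂`, and for any `f : A → B`, if `g₁ ∘ f ≈_A g₂ ∘ f` then `f⁻¹[S] ∈ R`. -/
theorem stmt6 {A B : Type} [Nonempty A] (R : Set (Set A)) (𝒮 : Set (Set B))
    (hK1R : IsK1 R) (hK1S : IsK1 𝒮)
    (S : Set B) (hS : S ∈ 𝒮)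
    (g₁ g₂ : B → Fin 2)
    (hg₁ : ∀ b, (b ∈ S → g₁ b = 0) ∧ (b ∉ S → g₁ b = 1))
    (hg₂ : ∀ b, (b ∈ S → g₂ b = 1) ∧ (b ∉ S → g₂ b = 0)) :
    Approx 𝒮 g₁ g₂ ∧ g₁ ≠ g₂ ∧
      ∀ f : A → B, Approx R (g₁ ∘ f) (g₂ ∘ f) → f ⁻¹' S ∈ R := by
  obtain ⟨hSne, hScmem⟩ := hK1S S hS
  obtain ⟨hScne, -⟩ := hK1S Sᶜ hScmem
  obtain ⟨b₀, hb₀⟩ := hSne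
  obtain ⟨b₁, hb₁⟩ := hScne
  have hne : ∀ b, g₁ b ≠ g₂ b := by
    intro b
    by_cases hb : b ∈ S
    · rw [(hg₁ b).1 hb, (hg₂ b).1 hb]; decide
    · rw [(hg₁ b).2 hb, (hg₂ b).2 hb]; decide
  have hpre1 : g₁ ⁻¹' {0} = S := by
    ext b
    by_cases hb : b ∈ S
    · simp [hb, (hg₁ b).1 hb]
    · simp [hb, (hg₁ b).2 hb]
  have hpre2 : g₂ ⁻¹' {1} = S := by
    ext b
    by_cases hb : b ∈ S
    · simp [hb, (hg₂ b).1 hb]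
    · simp [hb, (hg₂ b).2 hb]
  refine ⟨Or.inr ⟨0, 1, by decide, ?_, ?_, by rw [hpre1, hpre2], by rw [hpre1]; exact hS⟩,
    fun h => hne b₀ (congrFun h b₀), ?_⟩
  · apply subset_antisymm
    · rintro x ⟨b, rfl⟩
      by_cases hb : b ∈ S
      · simp [(hg₁ b).1 hb]
      · simp [(hg₁ b).2 hb]
    · rintro x hx
      rcases hx with rfl | rfl
      · exact ⟨b₀, (hg₁ b₀).1 hb₀⟩
      · exact ⟨b₁, (hg₁ b₁).2 hb₁⟩
  · apply subset_antisymm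
    · rintro x ⟨b, rfl⟩
      by_cases hb : b ∈ S
      · simp [(hg₂ b).1 hb]
      · simp [(hg₂ b).2 hb]
    · rintro x hx
      rcases hx with rfl | rfl
      · exact ⟨b₁, (hg₂ b₁).2 hb₁⟩
      · exact ⟨b₀, (hg₂ b₀).1 hb₀⟩
  · intro f hf
    rcases hf with h | ⟨x, x', hxx', -, -, -, hmem⟩
    · obtain ⟨a⟩ := ‹Nonempty A›
      exact absurd (congrFun h a) (hne (f a))
    · have key : ∀ y : Fin 2, (g₁ ∘ f) ⁻¹' {y} = if y = 0 then f ⁻¹' S else (f ⁻¹' S)ᶜ := by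
        intro y
        ext a
        by_cases hb : f a ∈ S
        · simp only [Set.mem_preimage, Function.comp_apply, (hg₁ (f a)).1 hb]
          fin_cases y <;> simp [hb]
        · simp only [Set.mem_preimage, Function.comp_apply, (hg₁ (f a)).2 hb]
          fin_cases y <;> simp [hb]
      by_cases hx0 : x = 0
      · rw [key, if_pos hx0] at hmem; exact hmem
      · rw [key, if_neg hx0] at hmem
        have := (hK1R _ hmem).2
        rwa [compl_compl] at this
end

section
/- In the construction Ψ(A, R) = (A ⊔ V, R̄), every member of R̄ has nonempty intersection with V. Consequently, if g : A ⊔ V → B ⊔ V is continuous (preimages of members of S̄ belong to R̄), then g maps V onto V, g restricted to V is a bijection of V, and g[A] ⊆ B. -/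
/-- The enriched family R̄ on `A ⊔ V` (with `V = Fin 6` carrying a graph with edge
family `G`): singletons `{vᵢ}` and their complements, edges and their complements,
and the sets `{v₀,v₁,v₂} ∪ R` and `{v₃,v₄,v₅} ∪ (A \ R)` for `R ∈ ℛ`. -/
def Rbar {A : Type} (ℛ : Set (Set A)) (G : Set (Set (Fin 6))) :
    Set (Set (A ⊕ Fin 6)) :=
  {Q | (∃ i : Fin 6, Q = {Sum.inr i}) ∨ (∃ i : Fin 6, Q = {Sum.inr i}ᶜ) ∨
    (∃ e ∈ G, Q = Sum.inr '' e) ∨ (∃ e ∈ G, Q = (Sum.inr '' e)ᶜ) ∨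
    (∃ r ∈ ℛ, Q = Sum.inr '' ({0, 1, 2} : Set (Fin 6)) ∪ Sum.inl '' r) ∨
    (∃ r ∈ ℛ, Q = Sum.inr '' ({3, 4, 5} : Set (Fin 6)) ∪ Sum.inl '' rᶜ)}

open Classical in
/-- A member of R̄ whose trace on V has at most one point is a singleton `{vⱼ}`. -/
lemma trace_card_one {A : Type} (ℛ : Set (Set A)) (G : Set (Set (Fin 6)))
    (hG : ∀ e ∈ G, ∃ a b : Fin 6, a ≠ b ∧ e = {a, b})
    {Q : Set (A ⊕ Fin 6)} (hQ : Q ∈ Rbar ℛ G)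
    (h1 : (Finset.univ.filter (fun j : Fin 6 => Sum.inr j ∈ Q)).card ≤ 1) :
    ∃ j : Fin 6, Q = {Sum.inr j} := by
  have two : ∀ x y : Fin 6, x ≠ y → Sum.inr x ∈ Q → Sum.inr y ∈ Q → False := by
    intro x y hxy hx hy
    have : 1 < (Finset.univ.filter (fun j : Fin 6 => Sum.inr j ∈ Q)).card :=
      Finset.one_lt_card.mpr ⟨x, Finset.mem_filter.mpr ⟨Finset.mem_univ x, hx⟩,
        y, Finset.mem_filter.mpr ⟨Finset.mem_univ y, hy⟩, hxy⟩
    omega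
  rcases hQ with ⟨i, rfl⟩ | ⟨i, rfl⟩ | ⟨e, he, rfl⟩ | ⟨e, he, rfl⟩ |
    ⟨r, hr, rfl⟩ | ⟨r, hr, rfl⟩
  · exact ⟨i, rfl⟩
  · have hh : ∀ i : Fin 6, ∃ x y : Fin 6, x ≠ y ∧ x ≠ i ∧ y ≠ i := by decide
    obtain ⟨x, y, hxy, hxi, hyi⟩ := hh i
    exact absurd (two x y hxy (by simp [hxi]) (by simp [hyi])) (fun h => h)
  · obtain ⟨a, b, hab, rfl⟩ := hG e he
    exact absurd (two a b hab ⟨a, by simp, rfl⟩ ⟨b, by simp, rfl⟩) (fun h => h)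
  · obtain ⟨a, b, hab, rfl⟩ := hG e he
    have hh : ∀ a b : Fin 6, ∃ x y : Fin 6, x ≠ y ∧ x ≠ a ∧ x ≠ b ∧ y ≠ a ∧ y ≠ b := by
      decide
    obtain ⟨x, y, hxy, hxa, hxb, hya, hyb⟩ := hh a b
    refine absurd (two x y hxy ?_ ?_) (fun h => h)
    · intro hx
      obtain ⟨c, hc, hcx⟩ := hx
      rcases hc with rfl | rfl <;> simp_all
    · intro hy
      obtain ⟨c, hc, hcy⟩ := hy
      rcases hc with rfl | rfl <;> simp_all
  · refine absurd (two 0 1 (by decide) ?_ ?_) (fun h => h)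
    · exact Or.inl ⟨0, by simp, rfl⟩
    · exact Or.inl ⟨1, by simp, rfl⟩
  · refine absurd (two 3 4 (by decide) ?_ ?_) (fun h => h)
    · exact Or.inl ⟨3, by simp, rfl⟩
    · exact Or.inl ⟨4, by simp, rfl⟩

/-- Every member of R̄ meets V; consequently a continuous map
`g : A ⊔ V → B ⊔ V` maps V onto V, restricts to a bijection of V, and maps A
into B. -/
theorem stmt9 {A B : Type} (ℛ : Set (Set A)) (𝒮 : Set (Set B))
    (G : Set (Set (Fin 6)))
    (hG : ∀ e ∈ G, ∃ a b : Fin 6, a ≠ b ∧ e = {a, b}) :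
    (∀ Q ∈ Rbar ℛ G, ∃ i : Fin 6, Sum.inr i ∈ Q) ∧
    ∀ g : A ⊕ Fin 6 → B ⊕ Fin 6,
      (∀ Q ∈ Rbar 𝒮 G, g ⁻¹' Q ∈ Rbar ℛ G) →
      (∀ i : Fin 6, ∃ j : Fin 6, g (Sum.inr j) = Sum.inr i) ∧
      (∃ h : Fin 6 → Fin 6, Function.Bijective h ∧
        ∀ j : Fin 6, g (Sum.inr j) = Sum.inr (h j)) ∧
      (∀ a : A, ∃ b : B, g (Sum.inl a) = Sum.inl b) := by
  have part1 : ∀ Q ∈ Rbar ℛ G, ∃ i : Fin 6, Sum.inr i ∈ Q := by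
    intro Q hQ
    rcases hQ with ⟨i, rfl⟩ | ⟨i, rfl⟩ | ⟨e, he, rfl⟩ | ⟨e, he, rfl⟩ |
      ⟨r, hr, rfl⟩ | ⟨r, hr, rfl⟩
    · exact ⟨i, rfl⟩
    · obtain ⟨j, hj⟩ : ∃ j : Fin 6, j ≠ i := by revert i; decide
      exact ⟨j, by simp [hj]⟩
    · obtain ⟨a, b, hab, rfl⟩ := hG e he
      exact ⟨a, a, by simp, rfl⟩
    · obtain ⟨a, b, hab, rfl⟩ := hG e he
      have hh : ∀ a b : Fin 6, ∃ c : Fin 6, c ≠ a ∧ c ≠ b := by decide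
      obtain ⟨c, hca, hcb⟩ := hh a b
      refine ⟨c, ?_⟩
      intro hc
      obtain ⟨d, hd, hdc⟩ := hc
      rcases hd with rfl | rfl <;> simp_all
    · exact ⟨0, Or.inl ⟨0, by simp, rfl⟩⟩
    · exact ⟨3, Or.inl ⟨3, by simp, rfl⟩⟩
  refine ⟨part1, fun g hg => ?_⟩
  classical
  -- the preimages of the singletons
  have hP : ∀ i : Fin 6, g ⁻¹' {Sum.inr i} ∈ Rbar ℛ G := fun i =>
    hg _ (Or.inl ⟨i, rfl⟩)
  set T : Fin 6 → Finset (Fin 6) :=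
    fun i => Finset.univ.filter (fun j => g (Sum.inr j) = Sum.inr i) with hT
  have hTmem : ∀ i j, j ∈ T i ↔ g (Sum.inr j) = Sum.inr i := by
    intro i j; simp [hT]
  have hT1 : ∀ i, 1 ≤ (T i).card := by
    intro i
    obtain ⟨j, hj⟩ := part1 _ (hP i)
    exact Finset.card_pos.mpr ⟨j, (hTmem i j).mpr hj⟩
  have hdisj : ∀ i i' : Fin 6, i ≠ i' → Disjoint (T i) (T i') := by
    intro i i' hii
    refine Finset.disjoint_left.mpr fun j hj hj' => hii ?_
    have h1 := (hTmem i j).mp hj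
    have h2 := (hTmem i' j).mp hj'
    rw [h1] at h2
    exact Sum.inr.inj h2
  have hsum : ∑ i : Fin 6, (T i).card ≤ 6 := by
    rw [← Finset.card_biUnion (fun i _ i' _ h => hdisj i i' h)]
    calc (Finset.univ.biUnion T).card ≤ (Finset.univ : Finset (Fin 6)).card :=
          Finset.card_le_card (Finset.subset_univ _)
      _ = 6 := by simp
  have hsum2 : (6 : ℕ) ≤ ∑ i : Fin 6, (T i).card := by
    calc (6 : ℕ) = ∑ _i : Fin 6, 1 := by simp
      _ ≤ ∑ i : Fin 6, (T i).card := Finset.sum_le_sum fun i _ => hT1 i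
  have hcard : ∀ i, (T i).card = 1 := by
    intro i
    by_contra hne
    have h2 : 2 ≤ (T i).card := by
      have := hT1 i; omega
    have : 7 ≤ ∑ i : Fin 6, (T i).card := by
      have := Finset.sum_lt_sum (f := fun _ : Fin 6 => (1 : ℕ))
        (g := fun i => (T i).card) (fun i _ => hT1 i)
        ⟨i, Finset.mem_univ i, show (1 : ℕ) < (T i).card by omega⟩
      simp at this
      omega
    omega
  choose σ hσ using fun i => Finset.card_eq_one.mp (hcard i)
  have hσmem : ∀ i, g (Sum.inr (σ i)) = Sum.inr i := by
    intro i
    have : σ i ∈ T i := by rw [hσ i]; exact Finset.mem_singleton_self _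
    exact (hTmem i (σ i)).mp this
  have hσinj : Function.Injective σ := by
    intro i i' h
    have h1 := hσmem i
    rw [h] at h1
    rw [hσmem i'] at h1
    exact (Sum.inr.inj h1).symm
  have hσbij : Function.Bijective σ := Finite.injective_iff_bijective.mp hσinj
  refine ⟨fun i => ⟨σ i, hσmem i⟩, ?_, ?_⟩
  · let E := Equiv.ofBijective σ hσbij
    refine ⟨E.symm, E.symm.bijective, fun j => ?_⟩
    have h1 : σ (E.symm j) = j := E.apply_symm_apply j
    calc g (Sum.inr j) = g (Sum.inr (σ (E.symm j))) := by rw [h1]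
      _ = Sum.inr (E.symm j) := hσmem _
  · intro a
    cases hga : g (Sum.inl a) with
    | inl b => exact ⟨b, rfl⟩
    | inr i =>
      exfalso
      have htr : Finset.univ.filter (fun j : Fin 6 => Sum.inr j ∈ g ⁻¹' {Sum.inr i})
          = T i := by
        ext j; simp [hT]
      obtain ⟨j0, hj0⟩ := trace_card_one ℛ G hG (hP i)
        (by rw [htr, hcard i])
      have : Sum.inl a ∈ g ⁻¹' {Sum.inr i} := by simp [hga]
      rw [hj0] at this
      simp at this
end

section
/- Continuity of Ψf: if f : A → B satisfies f⁻¹[S] ∈ R for all S ∈ S, then the map f ⊔ id_V : A ⊔ V → B ⊔ V satisfies (f ⊔ id_V)⁻¹[Q] ∈ R̄ for every Q ∈ S̄. -/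
lemma pre_inr {A B : Type} (f : A → B) (e : Set (Fin 6)) :
    (Sum.map f (id : Fin 6 → Fin 6)) ⁻¹' (Sum.inr '' e) = Sum.inr '' e := by
  ext x
  cases x with
  | inl a => simp
  | inr i => simp

lemma pre_union {A B : Type} (f : A → B) (e : Set (Fin 6)) (r : Set B) :
    (Sum.map f (id : Fin 6 → Fin 6)) ⁻¹' (Sum.inr '' e ∪ Sum.inl '' r)
      = Sum.inr '' e ∪ Sum.inl '' (f ⁻¹' r) := by
  ext x
  cases x with
  | inl a => simp
  | inr i => simp

/-- Continuity of Ψf: if `f : A → B` is continuous with respect to ℛ, 𝒮, then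
`f ⊔ id_V : A ⊔ V → B ⊔ V` is continuous with respect to the enriched families. -/
theorem stmt10 {A B : Type} (ℛ : Set (Set A)) (𝒮 : Set (Set B))
    (G : Set (Set (Fin 6)))
    (f : A → B) (hf : ∀ s ∈ 𝒮, f ⁻¹' s ∈ ℛ) :
    ∀ Q ∈ Rbar 𝒮 G, (Sum.map f (id : Fin 6 → Fin 6)) ⁻¹' Q ∈ Rbar ℛ G := by
  rintro Q (⟨i, rfl⟩ | ⟨i, rfl⟩ | ⟨e, he, rfl⟩ | ⟨e, he, rfl⟩ | ⟨r, hr, rfl⟩ | ⟨r, hr, rfl⟩)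
  · left
    refine ⟨i, ?_⟩
    rw [show ({Sum.inr i} : Set (B ⊕ Fin 6)) = Sum.inr '' {i} by simp, pre_inr]
    simp
  · right; left
    refine ⟨i, ?_⟩
    rw [Set.preimage_compl,
      show ({Sum.inr i} : Set (B ⊕ Fin 6)) = Sum.inr '' {i} by simp, pre_inr]
    simp
  · right; right; left
    exact ⟨e, he, pre_inr f e⟩
  · right; right; right; left
    exact ⟨e, he, by rw [Set.preimage_compl, pre_inr]⟩
  · right; right; right; right; left
    exact ⟨f ⁻¹' r, hf r hr, pre_union f _ r⟩
  · right; right; right; right; right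
    refine ⟨f ⁻¹' r, hf r hr, ?_⟩
    rw [pre_union, Set.preimage_compl]
end

section
/- Large component determination: let F and G be |X|-accessible set functors with X infinite, and let μ : H → F, ν : H → G, α : F → K, β : G → K be natural transformations such that α_X μ_X (x) = β_X ν_X (x) for all x ∈ HX. Then for every set Y with |Y| ≥ |X| and every y ∈ HY, α_Y μ_Y (y) = β_Y ν_Y (y). -/
open CategoryTheory

/-- A set functor `F` is `|X|`-accessible: every element of `FY` is in the image
of `Ff` for some `f : X' → Y` with `|X'| < |X|`. -/
def IsAccessibleAt (F : Type ⥤ Type) (X : Type) : Prop :=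
  ∀ (Y : Type) (y : F.obj Y), ∃ (X' : Type) (s' : F.obj X') (f : X' → Y),
    Cardinal.mk X' < Cardinal.mk X ∧ F.map (TypeCat.ofHom f) s' = y

open Cardinal in
lemma exists_inj_range_superset {X Y : Type} [Infinite X] (S : Set Y)
    (hS : #S < #X) (hXY : #X ≤ #Y) :
    ∃ i : X → Y, Function.Injective i ∧ S ⊆ Set.range i := by
  classical
  have hYinf : Infinite Y :=
    Cardinal.infinite_iff.mpr (le_trans (Cardinal.infinite_iff.mp ‹Infinite X›) hXY)
  have hcompl : #(↥Sᶜ) = #Y := Cardinal.mk_compl_of_infinite S (lt_of_lt_of_le hS hXY)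
  obtain ⟨e₁⟩ := (Cardinal.le_def _ _).mp hS.le
  have h2 : #X ≤ #(↥Sᶜ) := hcompl ▸ hXY
  obtain ⟨e₂⟩ := (Cardinal.le_def _ _).mp h2
  refine ⟨fun x => if h : ∃ s : S, e₁ s = x then ((h.choose : S) : Y) else ((e₂ x : ↥Sᶜ) : Y),
    ?_, ?_⟩
  · intro a b hab
    by_cases ha : ∃ s : S, e₁ s = a <;> by_cases hb : ∃ s : S, e₁ s = b <;>
      simp only [ha, hb, dif_pos, dif_neg, not_false_iff] at hab
    · have h : ha.choose = hb.choose := Subtype.ext hab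
      rw [← ha.choose_spec, ← hb.choose_spec, h]
    · exact absurd (hab ▸ ha.choose.2) (e₂ b).2
    · exact absurd (hab ▸ hb.choose.2) (e₂ a).2
    · exact e₂.injective (Subtype.ext hab)
  · intro s hs
    refine ⟨e₁ ⟨s, hs⟩, ?_⟩
    have h : ∃ t : S, e₁ t = e₁ ⟨s, hs⟩ := ⟨⟨s, hs⟩, rfl⟩
    simp only [dif_pos h]
    have := e₁.injective h.choose_spec
    rw [this]

/-- Large component determination: if `F` and `G` are `|X|`-accessible with `X`
infinite and `α ∘ μ` agrees with `β ∘ ν` at the component at `X`, then they agree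
at every set `Y` with `|Y| ≥ |X|`. -/
theorem stmt16 (F G K H : Type ⥤ Type)
    (μ : H ⟶ F) (ν : H ⟶ G) (α : F ⟶ K) (β : G ⟶ K)
    (X : Type) [Infinite X]
    (hF : IsAccessibleAt F X) (hG : IsAccessibleAt G X)
    (hX : ∀ x : H.obj X, α.app X (μ.app X x) = β.app X (ν.app X x)) :
    ∀ (Y : Type), Cardinal.mk X ≤ Cardinal.mk Y →
      ∀ y : H.obj Y, α.app Y (μ.app Y y) = β.app Y (ν.app Y y) := by
  intro Y hXY y
  obtain ⟨X₁, s₁, f₁, hX₁, hf₁⟩ := hF Y (μ.app Y y)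
  obtain ⟨X₂, s₂, f₂, hX₂, hf₂⟩ := hG Y (ν.app Y y)
  have hScard : Cardinal.mk ↥(Set.range f₁ ∪ Set.range f₂) < Cardinal.mk X := by
    calc Cardinal.mk ↥(Set.range f₁ ∪ Set.range f₂)
        ≤ Cardinal.mk ↥(Set.range f₁) + Cardinal.mk ↥(Set.range f₂) :=
          Cardinal.mk_union_le _ _
      _ ≤ Cardinal.mk X₁ + Cardinal.mk X₂ :=
          add_le_add Cardinal.mk_range_le Cardinal.mk_range_le
      _ < Cardinal.mk X :=
          Cardinal.add_lt_of_lt (Cardinal.infinite_iff.mp inferInstance) hX₁ hX₂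
  obtain ⟨i, hi, hSr⟩ := exists_inj_range_superset _ hScard hXY
  have hg₁ : ∀ a, ∃ x, i x = f₁ a := fun a => hSr (Or.inl ⟨a, rfl⟩)
  choose g₁ hg₁ using hg₁
  have hg₂ : ∀ a, ∃ x, i x = f₂ a := fun a => hSr (Or.inr ⟨a, rfl⟩)
  choose g₂ hg₂ using hg₂
  obtain ⟨m, hm⟩ := hi.hasLeftInverse
  have hfi₁ : f₁ = i ∘ g₁ := funext fun a => (hg₁ a).symm
  have hfi₂ : f₂ = i ∘ g₂ := funext fun a => (hg₂ a).symm
  have hμ : μ.app Y y = F.map (TypeCat.ofHom i) (F.map (TypeCat.ofHom g₁) s₁) := by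
    rw [← hf₁, hfi₁]
    exact FunctorToTypes.map_comp_apply F (TypeCat.ofHom g₁) (TypeCat.ofHom i) s₁
  have hν : ν.app Y y = G.map (TypeCat.ofHom i) (G.map (TypeCat.ofHom g₂) s₂) := by
    rw [← hf₂, hfi₂]
    exact FunctorToTypes.map_comp_apply G (TypeCat.ofHom g₂) (TypeCat.ofHom i) s₂
  have himi : (i ∘ m) ∘ i = i := by funext x; simp [Function.comp, hm x]
  have hFfix : F.map (TypeCat.ofHom (i ∘ m)) (μ.app Y y) = μ.app Y y := by
    rw [hμ, ← FunctorToTypes.map_comp_apply F (TypeCat.ofHom i) (TypeCat.ofHom (i ∘ m)) (F.map (TypeCat.ofHom g₁) s₁)]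
    show F.map (TypeCat.ofHom ((i ∘ m) ∘ i)) (F.map (TypeCat.ofHom g₁) s₁) = _
    rw [himi]
  have hGfix : G.map (TypeCat.ofHom (i ∘ m)) (ν.app Y y) = ν.app Y y := by
    rw [hν, ← FunctorToTypes.map_comp_apply G (TypeCat.ofHom i) (TypeCat.ofHom (i ∘ m)) (G.map (TypeCat.ofHom g₂) s₂)]
    show G.map (TypeCat.ofHom ((i ∘ m) ∘ i)) (G.map (TypeCat.ofHom g₂) s₂) = _
    rw [himi]
  set z : H.obj X := H.map (TypeCat.ofHom m) y with hz
  have hHy : H.map (TypeCat.ofHom (i ∘ m)) y = H.map (TypeCat.ofHom i) z := FunctorToTypes.map_comp_apply H (TypeCat.ofHom m) (TypeCat.ofHom i) y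
  calc α.app Y (μ.app Y y)
      = α.app Y (F.map (TypeCat.ofHom (i ∘ m)) (μ.app Y y)) := by rw [hFfix]
    _ = α.app Y (μ.app Y (H.map (TypeCat.ofHom (i ∘ m)) y)) :=
        congrArg _ (FunctorToTypes.naturality μ (TypeCat.ofHom (i ∘ m)) y).symm
    _ = α.app Y (μ.app Y (H.map (TypeCat.ofHom i) z)) := by rw [hHy]
    _ = α.app Y (F.map (TypeCat.ofHom i) (μ.app X z)) :=
        congrArg _ (FunctorToTypes.naturality μ (TypeCat.ofHom i) z)
    _ = K.map (TypeCat.ofHom i) (α.app X (μ.app X z)) := FunctorToTypes.naturality α (TypeCat.ofHom i) _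
    _ = K.map (TypeCat.ofHom i) (β.app X (ν.app X z)) := by rw [hX z]
    _ = β.app Y (G.map (TypeCat.ofHom i) (ν.app X z)) := (FunctorToTypes.naturality β (TypeCat.ofHom i) _).symm
    _ = β.app Y (ν.app Y (H.map (TypeCat.ofHom i) z)) :=
        congrArg _ (FunctorToTypes.naturality ν (TypeCat.ofHom i) z).symm
    _ = β.app Y (ν.app Y (H.map (TypeCat.ofHom (i ∘ m)) y)) := by rw [hHy]
    _ = β.app Y (G.map (TypeCat.ofHom (i ∘ m)) (ν.app Y y)) :=
        congrArg _ (FunctorToTypes.naturality ν (TypeCat.ofHom (i ∘ m)) y)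
    _ = β.app Y (ν.app Y y) := by rw [hGfix]
end

section
/- Isbell invariant completeness for accessible functors: let F, G be |X|-accessible set functors with X infinite. For pairs (μ : H → F, ν : H → G) and (μ' : H' → F, ν' : H' → G) of natural transformations, if T(μ,ν) = T(μ',ν') and T₀(μ,ν) = T₀(μ',ν'), then for every pair of natural transformations (α : F → K, β : G → K), αμ = βν if and only if αμ' = βν'. -/
open CategoryTheory

private lemma isbell_key (F G : Type ⥤ Type) (X : Type) [Infinite X]
    (hF : IsAccessibleAt F X) (hG : IsAccessibleAt G X)
    (H H' : Type ⥤ Type) (μ : H ⟶ F) (ν : H ⟶ G) (μ' : H' ⟶ F) (ν' : H' ⟶ G)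
    (hT : ∀ x' : H'.obj X, ∃ x : H.obj X,
        μ.app X x = μ'.app X x' ∧ ν.app X x = ν'.app X x')
    (hT₀ : ∀ x' : H'.obj Empty, ∃ x : H.obj Empty,
        μ.app Empty x = μ'.app Empty x' ∧ ν.app Empty x = ν'.app Empty x')
    (K : Type ⥤ Type) (α : F ⟶ K) (β : G ⟶ K)
    (h : μ ≫ α = ν ≫ β) : μ' ≫ α = ν' ≫ β := by
  classical
  have hpt : ∀ (Z : Type) (z : H.obj Z),
      α.app Z (μ.app Z z) = β.app Z (ν.app Z z) := by
    intro Z z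
    have := congrArg (fun t : H ⟶ K => t.app Z z) h
    simpa using this
  ext Y x'
  show α.app Y (μ'.app Y x') = β.app Y (ν'.app Y x')
  obtain hY | hY := isEmpty_or_nonempty Y
  · -- empty case: use T₀
    let e : Y ⟶ Empty := TypeCat.ofHom fun y => hY.elim y
    let e' : Empty ⟶ Y := TypeCat.ofHom fun x => x.elim
    have h1 : H'.map e' (H'.map e x') = x' := by
      rw [← FunctorToTypes.map_comp_apply]
      have he : (e ≫ e') = 𝟙 Y := by ext y; exact hY.elim y
      rw [he, FunctorToTypes.map_id_apply]
    obtain ⟨x, hx1, hx2⟩ := hT₀ (H'.map e x')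
    calc α.app Y (μ'.app Y x')
        = α.app Y (μ'.app Y (H'.map e' (H'.map e x'))) := by rw [h1]
      _ = α.app Y (F.map e' (μ'.app Empty (H'.map e x'))) := by
            rw [FunctorToTypes.naturality]
      _ = K.map e' (α.app Empty (μ'.app Empty (H'.map e x'))) :=
            FunctorToTypes.naturality α e' _
      _ = K.map e' (α.app Empty (μ.app Empty x)) := by rw [hx1]
      _ = K.map e' (β.app Empty (ν.app Empty x)) := by rw [hpt]
      _ = K.map e' (β.app Empty (ν'.app Empty (H'.map e x'))) := by rw [hx2]
      _ = β.app Y (ν'.app Y (H'.map e' (H'.map e x'))) := by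
            rw [FunctorToTypes.naturality ν' e', FunctorToTypes.naturality β e']
      _ = β.app Y (ν'.app Y x') := by rw [h1]
  · -- nonempty case: factor through X using accessibility
    obtain ⟨A, a, f, hA, hfa⟩ := hF Y (μ'.app Y x')
    obtain ⟨B, b, g, hB, hgb⟩ := hG Y (ν'.app Y x')
    obtain ⟨y₀⟩ := hY
    set S : Set Y := (Set.range f ∪ Set.range g) ∪ {y₀} with hSdef
    have hXinf : Cardinal.aleph0 ≤ Cardinal.mk X := Cardinal.infinite_iff.mp ‹Infinite X›
    have hScard : Cardinal.mk S < Cardinal.mk X := by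
      have h1 := Cardinal.mk_union_le (Set.range f ∪ Set.range g) ({y₀} : Set Y)
      have h2 := Cardinal.mk_union_le (Set.range f) (Set.range g)
      have h3 : Cardinal.mk (Set.range f) ≤ Cardinal.mk A := Cardinal.mk_range_le
      have h4 : Cardinal.mk (Set.range g) ≤ Cardinal.mk B := Cardinal.mk_range_le
      have h5 : Cardinal.mk ({y₀} : Set Y) = 1 := Cardinal.mk_singleton y₀
      have hle : Cardinal.mk S ≤ (Cardinal.mk A + Cardinal.mk B) + 1 := by
        refine le_trans h1 ?_
        exact add_le_add (le_trans h2 (add_le_add h3 h4)) h5.le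
      refine lt_of_le_of_lt hle ?_
      exact Cardinal.add_lt_of_lt hXinf (Cardinal.add_lt_of_lt hXinf hA hB)
        (lt_of_lt_of_le Cardinal.one_lt_aleph0 hXinf)
    obtain ⟨j⟩ := (Cardinal.le_def _ _).mp hScard.le
    have hy₀S : y₀ ∈ S := Or.inr rfl
    let r : Y → S := fun y => if h : y ∈ S then ⟨y, h⟩ else ⟨y₀, hy₀S⟩
    let u : Y ⟶ X := TypeCat.ofHom fun y => j (r y)
    let h' : X ⟶ Y := TypeCat.ofHom fun x => if hx : ∃ s : S, j s = x then ((hx.choose : S) : Y) else y₀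
    have hret : ∀ y ∈ S, h' (u y) = y := by
      intro y hy
      have hx : ∃ s : S, j s = u y := ⟨⟨y, hy⟩, by simp [u, r, hy]⟩
      have hc : hx.choose = ⟨y, hy⟩ := by
        apply j.injective
        rw [hx.choose_spec]
        simp [u, r, hy]
      show (if hx : ∃ s : S, j s = u y then ((hx.choose : S) : Y) else y₀) = y
      simp only [dif_pos hx, hc]
    have hmu : F.map h' (μ'.app X (H'.map u x')) = μ'.app Y x' := by
      rw [FunctorToTypes.naturality μ' u x', ← hfa,
        ← FunctorToTypes.map_comp_apply, ← FunctorToTypes.map_comp_apply]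
      have hfe : (TypeCat.ofHom f ≫ u ≫ h' : A ⟶ Y) = TypeCat.ofHom f := by
        ext a'; exact hret (f a') (Or.inl (Or.inl ⟨a', rfl⟩))
      rw [hfe]
    have hnu : G.map h' (ν'.app X (H'.map u x')) = ν'.app Y x' := by
      rw [FunctorToTypes.naturality ν' u x', ← hgb,
        ← FunctorToTypes.map_comp_apply, ← FunctorToTypes.map_comp_apply]
      have hge : (TypeCat.ofHom g ≫ u ≫ h' : B ⟶ Y) = TypeCat.ofHom g := by
        ext b'; exact hret (g b') (Or.inl (Or.inr ⟨b', rfl⟩))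
      rw [hge]
    obtain ⟨x, hx1, hx2⟩ := hT (H'.map u x')
    calc α.app Y (μ'.app Y x')
        = α.app Y (F.map h' (μ'.app X (H'.map u x'))) := by rw [hmu]
      _ = K.map h' (α.app X (μ'.app X (H'.map u x'))) :=
            FunctorToTypes.naturality α h' _
      _ = K.map h' (α.app X (μ.app X x)) := by rw [hx1]
      _ = K.map h' (β.app X (ν.app X x)) := by rw [hpt X x]
      _ = K.map h' (β.app X (ν'.app X (H'.map u x'))) := by rw [hx2]
      _ = β.app Y (G.map h' (ν'.app X (H'.map u x'))) :=
            (FunctorToTypes.naturality β h' _).symm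
      _ = β.app Y (ν'.app Y x') := by rw [hnu]

/-- Isbell invariant completeness: for `|X|`-accessible `F, G` with `X` infinite,
if the invariants `T(μ,ν) = {(μ_X(x), ν_X(x))}` and `T₀(μ,ν) = {(μ_∅(x), ν_∅(x))}`
of `(μ, ν)` and `(μ', ν')` coincide, then for every pair `(α : F → K, β : G → K)`,
`αμ = βν` iff `αμ' = βν'`. -/
theorem stmt18 (F G : Type ⥤ Type) (X : Type) [Infinite X]
    (hF : IsAccessibleAt F X) (hG : IsAccessibleAt G X)
    (H H' : Type ⥤ Type) (μ : H ⟶ F) (ν : H ⟶ G) (μ' : H' ⟶ F) (ν' : H' ⟶ G)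
    (hT : {p : F.obj X × G.obj X | ∃ x : H.obj X, p = (μ.app X x, ν.app X x)} =
          {p : F.obj X × G.obj X | ∃ x : H'.obj X, p = (μ'.app X x, ν'.app X x)})
    (hT₀ : {p : F.obj Empty × G.obj Empty |
              ∃ x : H.obj Empty, p = (μ.app Empty x, ν.app Empty x)} =
           {p : F.obj Empty × G.obj Empty |
              ∃ x : H'.obj Empty, p = (μ'.app Empty x, ν'.app Empty x)}) :
    ∀ (K : Type ⥤ Type) (α : F ⟶ K) (β : G ⟶ K),
      μ ≫ α = ν ≫ β ↔ μ' ≫ α = ν' ≫ β := by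
  intro K α β
  have hT1 : ∀ x' : H'.obj X, ∃ x : H.obj X,
      μ.app X x = μ'.app X x' ∧ ν.app X x = ν'.app X x' := by
    intro x'
    have hmem : (μ'.app X x', ν'.app X x') ∈
        {p : F.obj X × G.obj X | ∃ x : H.obj X, p = (μ.app X x, ν.app X x)} := by
      rw [hT]; exact ⟨x', rfl⟩
    obtain ⟨x, hx⟩ := hmem
    exact ⟨x, congrArg Prod.fst hx.symm, congrArg Prod.snd hx.symm⟩
  have hT2 : ∀ x : H.obj X, ∃ x' : H'.obj X,
      μ'.app X x' = μ.app X x ∧ ν'.app X x' = ν.app X x := by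
    intro x
    have hmem : (μ.app X x, ν.app X x) ∈
        {p : F.obj X × G.obj X | ∃ x' : H'.obj X, p = (μ'.app X x', ν'.app X x')} := by
      rw [← hT]; exact ⟨x, rfl⟩
    obtain ⟨x', hx⟩ := hmem
    exact ⟨x', congrArg Prod.fst hx.symm, congrArg Prod.snd hx.symm⟩
  have hT₀1 : ∀ x' : H'.obj Empty, ∃ x : H.obj Empty,
      μ.app Empty x = μ'.app Empty x' ∧ ν.app Empty x = ν'.app Empty x' := by
    intro x'
    have hmem : (μ'.app Empty x', ν'.app Empty x') ∈
        {p : F.obj Empty × G.obj Empty |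
          ∃ x : H.obj Empty, p = (μ.app Empty x, ν.app Empty x)} := by
      rw [hT₀]; exact ⟨x', rfl⟩
    obtain ⟨x, hx⟩ := hmem
    exact ⟨x, congrArg Prod.fst hx.symm, congrArg Prod.snd hx.symm⟩
  have hT₀2 : ∀ x : H.obj Empty, ∃ x' : H'.obj Empty,
      μ'.app Empty x' = μ.app Empty x ∧ ν'.app Empty x' = ν.app Empty x := by
    intro x
    have hmem : (μ.app Empty x, ν.app Empty x) ∈
        {p : F.obj Empty × G.obj Empty |
          ∃ x' : H'.obj Empty, p = (μ'.app Empty x', ν'.app Empty x')} := by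
      rw [← hT₀]; exact ⟨x, rfl⟩
    obtain ⟨x', hx⟩ := hmem
    exact ⟨x', congrArg Prod.fst hx.symm, congrArg Prod.snd hx.symm⟩
  constructor
  · intro h
    exact isbell_key F G X hF hG H H' μ ν μ' ν' hT1 hT₀1 K α β h
  · intro h
    exact isbell_key F G X hF hG H' H μ' ν' μ ν hT2 hT₀2 K α β h
end
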